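/- Let M be a countable L-structure, β < ω₁ as in the Scott analysis, and suppose ā, b̄ are finite tuples in M of the same length such that M ⊨ φ_{β,c̄}(ā) and M ⊨ φ_{β,c̄}(b̄) for some tuple c̄ from M. Then there is an automorphism of M taking ā to b̄. -/

import Mathlib

open FirstOrder FirstOrder.Language

/-- The canonical Scott-analysis (back-and-forth) relation between tuples of two structures:
`ScottEq L M N α n a b` says that `b` satisfies the level-`α` Scott formula `φ_{α,a}` of the
tuple `a`, i.e. `a` and `b` satisfy the same atomic formulas and, for every `β < α`, the
one-point extensions of `a` and of `b` match up at level `β`. -/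
def ScottEq (L : FirstOrder.Language.{0,0}) (M N : Type) [L.Structure M] [L.Structure N] :
    Ordinal → (n : ℕ) → (Fin n → M) → (Fin n → N) → Prop
  | α, n, a, b =>
    (∀ φ : L.Formula (Fin n), φ.IsAtomic → (φ.Realize a ↔ φ.Realize b)) ∧
    ∀ β : Ordinal, β < α →
      (∀ c : M, ∃ d : N, ScottEq L M N β (n + 1) (Fin.snoc a c) (Fin.snoc b d)) ∧
      (∀ d : N, ∃ c : M, ScottEq L M N β (n + 1) (Fin.snoc a c) (Fin.snoc b d))
  termination_by α => α

/-- `β` is a Scott ordinal for `M`: the Scott analysis of `M` stabilizes at level `β`. -/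
def IsScottOrdinal (L : FirstOrder.Language.{0,0}) (M : Type) [L.Structure M]
    (β : Ordinal) : Prop :=
  ∀ (n : ℕ) (c a : Fin n → M), ScottEq L M M β n c a → ScottEq L M M (β + 1) n c a

section ScottAux

variable {L : FirstOrder.Language.{0,0}} {M : Type} [L.Structure M]

theorem scottEq_symm (α : Ordinal) : ∀ {n : ℕ} {x y : Fin n → M},
    ScottEq L M M α n x y → ScottEq L M M α n y x := by
  induction α using Ordinal.induction with
  | h α IH =>
    intro n x y h
    rw [ScottEq] at h ⊢
    refine ⟨fun φ hφ => (h.1 φ hφ).symm, fun γ hγ => ?_⟩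
    obtain ⟨h1, h2⟩ := h.2 γ hγ
    exact ⟨fun c => (h2 c).imp fun d hd => IH γ hγ hd,
           fun d => (h1 d).imp fun c hc => IH γ hγ hc⟩

theorem scottEq_trans (α : Ordinal) : ∀ {n : ℕ} {x y z : Fin n → M},
    ScottEq L M M α n x y → ScottEq L M M α n y z → ScottEq L M M α n x z := by
  induction α using Ordinal.induction with
  | h α IH =>
    intro n x y z hxy hyz
    rw [ScottEq] at hxy hyz ⊢
    refine ⟨fun φ hφ => (hxy.1 φ hφ).trans (hyz.1 φ hφ), fun γ hγ => ?_⟩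
    obtain ⟨p1, p2⟩ := hxy.2 γ hγ
    obtain ⟨q1, q2⟩ := hyz.2 γ hγ
    constructor
    · intro c
      obtain ⟨d, hd⟩ := p1 c
      obtain ⟨e, he⟩ := q1 d
      exact ⟨e, IH γ hγ hd he⟩
    · intro e
      obtain ⟨d, hd⟩ := q2 e
      obtain ⟨c, hc⟩ := p2 d
      exact ⟨c, IH γ hγ hc hd⟩

theorem scottEq_atomic {α : Ordinal} {n : ℕ} {x y : Fin n → M}
    (h : ScottEq L M M α n x y) (φ : L.Formula (Fin n)) (hφ : φ.IsAtomic) :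
    φ.Realize x ↔ φ.Realize y := by
  rw [ScottEq] at h; exact h.1 φ hφ

theorem scottEq_eq_iff {α : Ordinal} {n : ℕ} {x y : Fin n → M}
    (h : ScottEq L M M α n x y) (i j : Fin n) : x i = x j ↔ y i = y j := by
  have := scottEq_atomic h (Term.equal (Term.var i) (Term.var j)) (BoundedFormula.IsAtomic.equal _ _)
  simpa using this

theorem scottEq_fun_iff {α : Ordinal} {n r : ℕ} {x y : Fin n → M}
    (h : ScottEq L M M α n x y) (g : L.Functions r) (u : Fin r → Fin n) (j : Fin n) :
    Structure.funMap g (x ∘ u) = x j ↔ Structure.funMap g (y ∘ u) = y j := by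
  have := scottEq_atomic h
    (Term.equal (Term.func g fun i => Term.var (u i)) (Term.var j)) (BoundedFormula.IsAtomic.equal _ _)
  simpa [Function.comp_def] using this

theorem scottEq_rel_iff {α : Ordinal} {n r : ℕ} {x y : Fin n → M}
    (h : ScottEq L M M α n x y) (R : L.Relations r) (u : Fin r → Fin n) :
    Structure.RelMap R (x ∘ u) ↔ Structure.RelMap R (y ∘ u) := by
  have := scottEq_atomic h (R.formula fun i => Term.var (u i)) (BoundedFormula.IsAtomic.rel _ _)
  simpa [Function.comp_def] using this

theorem scottEq_extend {β : Ordinal} (hS : IsScottOrdinal L M β) {k : ℕ}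
    {x y : Fin k → M} (h : ScottEq L M M β k x y) (m : M) :
    ∃ cd : M × M, ScottEq L M M β (k + 2)
      (Fin.snoc (Fin.snoc x m) cd.1) (Fin.snoc (Fin.snoc y cd.2) m) := by
  have hlt : β < β + 1 := by
    rw [Ordinal.add_one_eq_succ]; exact Order.lt_succ β
  have h1 := hS k x y h
  rw [ScottEq] at h1
  obtain ⟨d, hd⟩ := (h1.2 β hlt).1 m
  have h2 := hS _ _ _ hd
  rw [ScottEq] at h2
  obtain ⟨c, hc⟩ := (h2.2 β hlt).2 m
  exact ⟨(c, d), hc⟩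

/-- The back-and-forth sequence of pairs of tuples. -/
noncomputable def scottSeq {β : Ordinal} (hS : IsScottOrdinal L M β) (e : ℕ → M) {n : ℕ}
    (a b : Fin n → M) (h0 : ScottEq L M M β n a b) :
    (k : ℕ) → {p : (Fin (n + 2 * k) → M) × (Fin (n + 2 * k) → M) //
      ScottEq L M M β (n + 2 * k) p.1 p.2}
  | 0 => ⟨(a, b), h0⟩
  | k + 1 =>
    let p := scottSeq hS e a b h0 k
    let w := scottEq_extend hS p.2 (e k)
    ⟨(Fin.snoc (Fin.snoc p.1.1 (e k)) w.choose.1,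
      Fin.snoc (Fin.snoc p.1.2 w.choose.2) (e k)), w.choose_spec⟩

variable {β : Ordinal} {hS : IsScottOrdinal L M β} {e : ℕ → M} {n : ℕ}
  {a b : Fin n → M} {h0 : ScottEq L M M β n a b}

theorem scottSeq_succ_fst (k : ℕ) (i : Fin (n + 2 * k)) :
    (scottSeq hS e a b h0 (k + 1)).1.1 (Fin.castLE (by omega) i)
      = (scottSeq hS e a b h0 k).1.1 i := by
  have hcast : (Fin.castLE (show n + 2 * k ≤ n + 2 * (k + 1) by omega) i)
      = Fin.castSucc (Fin.castSucc i) := by ext; simp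
  rw [scottSeq, hcast]
  simp [Fin.snoc_castSucc]

theorem scottSeq_succ_snd (k : ℕ) (i : Fin (n + 2 * k)) :
    (scottSeq hS e a b h0 (k + 1)).1.2 (Fin.castLE (by omega) i)
      = (scottSeq hS e a b h0 k).1.2 i := by
  have hcast : (Fin.castLE (show n + 2 * k ≤ n + 2 * (k + 1) by omega) i)
      = Fin.castSucc (Fin.castSucc i) := by ext; simp
  rw [scottSeq, hcast]
  simp [Fin.snoc_castSucc]

theorem scottSeq_mono_fst {k l : ℕ} (hkl : k ≤ l) (i : Fin (n + 2 * k)) :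
    (scottSeq hS e a b h0 l).1.1 (Fin.castLE (by omega) i)
      = (scottSeq hS e a b h0 k).1.1 i := by
  induction l, hkl using Nat.le_induction with
  | base => rfl
  | succ l hkl IH =>
    have : (Fin.castLE (show n + 2 * k ≤ n + 2 * (l + 1) by omega) i)
        = Fin.castLE (by omega) (Fin.castLE (show n + 2 * k ≤ n + 2 * l by omega) i) := rfl
    rw [this, scottSeq_succ_fst, IH]

theorem scottSeq_mono_snd {k l : ℕ} (hkl : k ≤ l) (i : Fin (n + 2 * k)) :
    (scottSeq hS e a b h0 l).1.2 (Fin.castLE (by omega) i)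
      = (scottSeq hS e a b h0 k).1.2 i := by
  induction l, hkl using Nat.le_induction with
  | base => rfl
  | succ l hkl IH =>
    have : (Fin.castLE (show n + 2 * k ≤ n + 2 * (l + 1) by omega) i)
        = Fin.castLE (by omega) (Fin.castLE (show n + 2 * k ≤ n + 2 * l by omega) i) := rfl
    rw [this, scottSeq_succ_snd, IH]

theorem scottSeq_mem_fst (j : ℕ) :
    (scottSeq hS e a b h0 (j + 1)).1.1 (Fin.castSucc (Fin.last (n + 2 * j))) = e j := by
  rw [scottSeq]
  simp

theorem scottSeq_mem_snd (j : ℕ) :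
    (scottSeq hS e a b h0 (j + 1)).1.2 (Fin.last (n + 2 * j + 1)) = e j := by
  rw [scottSeq]
  exact @Fin.snoc_last (n + 2 * j + 1) (fun _ => M) _ _

theorem scott_aux {β : Ordinal} (hS : IsScottOrdinal L M β) {e : ℕ → M}
    (he : Function.Surjective e) {n : ℕ} {a b : Fin n → M}
    (hab : ScottEq L M M β n a b) :
    ∃ f : M ≃[L] M, ∀ i, f (a i) = b i := by
  classical
  set x : (k : ℕ) → Fin (n + 2 * k) → M := fun k => (scottSeq hS e a b hab k).1.1 with hxdef
  set y : (k : ℕ) → Fin (n + 2 * k) → M := fun k => (scottSeq hS e a b hab k).1.2 with hydef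
  have hsc : ∀ k, ScottEq L M M β (n + 2 * k) (x k) (y k) :=
    fun k => (scottSeq hS e a b hab k).2
  have hxmono : ∀ {k l : ℕ} (hkl : k ≤ l) (i : Fin (n + 2 * k)),
      x l (Fin.castLE (by omega) i) = x k i := fun hkl i => scottSeq_mono_fst hkl i
  have hymono : ∀ {k l : ℕ} (hkl : k ≤ l) (i : Fin (n + 2 * k)),
      y l (Fin.castLE (by omega) i) = y k i := fun hkl i => scottSeq_mono_snd hkl i
  have totx : ∀ m : M, ∃ (k : ℕ) (i : Fin (n + 2 * k)), x k i = m := by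
    intro m
    obtain ⟨j, rfl⟩ := he m
    exact ⟨j + 1, Fin.castSucc (Fin.last (n + 2 * j)), scottSeq_mem_fst j⟩
  have toty : ∀ m : M, ∃ (k : ℕ) (i : Fin (n + 2 * k)), y k i = m := by
    intro m
    obtain ⟨j, rfl⟩ := he m
    exact ⟨j + 1, Fin.last (n + 2 * j + 1), scottSeq_mem_snd j⟩
  set R : M → M → Prop :=
    fun m m' => ∃ (k : ℕ) (i : Fin (n + 2 * k)), x k i = m ∧ y k i = m' with hRdef
  have hfun : ∀ {m m1 m2 : M}, R m m1 → R m m2 → m1 = m2 := by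
    rintro m m1 m2 ⟨k1, i1, hx1, hy1⟩ ⟨k2, i2, hx2, hy2⟩
    have e1 : x (max k1 k2) (Fin.castLE (by omega) i1) = m := by
      rw [hxmono (le_max_left k1 k2) i1, hx1]
    have e2 : x (max k1 k2) (Fin.castLE (by omega) i2) = m := by
      rw [hxmono (le_max_right k1 k2) i2, hx2]
    have key := (scottEq_eq_iff (hsc (max k1 k2)) _ _).mp (e1.trans e2.symm)
    rw [hymono (le_max_left k1 k2) i1, hymono (le_max_right k1 k2) i2] at key
    rw [← hy1, ← hy2]; exact key
  have hinjR : ∀ {m1 m2 m' : M}, R m1 m' → R m2 m' → m1 = m2 := by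
    rintro m1 m2 m' ⟨k1, i1, hx1, hy1⟩ ⟨k2, i2, hx2, hy2⟩
    have e1 : y (max k1 k2) (Fin.castLE (by omega) i1) = m' := by
      rw [hymono (le_max_left k1 k2) i1, hy1]
    have e2 : y (max k1 k2) (Fin.castLE (by omega) i2) = m' := by
      rw [hymono (le_max_right k1 k2) i2, hy2]
    have key := (scottEq_eq_iff (hsc (max k1 k2)) _ _).mpr (e1.trans e2.symm)
    rw [hxmono (le_max_left k1 k2) i1, hxmono (le_max_right k1 k2) i2] at key
    rw [← hx1, ← hx2]; exact key
  have totR : ∀ m : M, ∃ m', R m m' := by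
    intro m
    obtain ⟨k, i, hi⟩ := totx m
    exact ⟨y k i, k, i, hi, rfl⟩
  choose F hF using totR
  have hsurj : Function.Surjective F := by
    intro m'
    obtain ⟨k, i, hi⟩ := toty m'
    exact ⟨x k i, hfun (hF _) ⟨k, i, rfl, hi⟩⟩
  have hinj : Function.Injective F := fun m1 m2 h => hinjR (hF m1) (h ▸ hF m2)
  have stage : ∀ {r : ℕ} (v : Fin r → M), ∃ (l : ℕ) (u : Fin r → Fin (n + 2 * l)),
      ∀ i, x l (u i) = v i ∧ y l (u i) = F (v i) := by
    intro r v
    choose K I hKI using fun i => totx (v i)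
    refine ⟨Finset.univ.sup K, fun i =>
      Fin.castLE (by have := Finset.le_sup (f := K) (Finset.mem_univ i); omega) (I i),
      fun i => ?_⟩
    have h1 : x (Finset.univ.sup K)
        (Fin.castLE (by have := Finset.le_sup (f := K) (Finset.mem_univ i); omega) (I i))
        = v i := by
      rw [hxmono (Finset.le_sup (f := K) (Finset.mem_univ i)) (I i), hKI i]
    exact ⟨h1, hfun ⟨_, _, h1, rfl⟩ (hF (v i))⟩
  refine ⟨{ toEquiv := _root_.Equiv.ofBijective F ⟨hinj, hsurj⟩,
            map_fun' := ?_, map_rel' := ?_ }, ?_⟩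
  · intro r g v
    obtain ⟨l, u, hu⟩ := stage (Fin.snoc v (Structure.funMap g v))
    have hx' : ∀ i, x l (u (Fin.castSucc i)) = v i := fun i => by
      simpa using (hu (Fin.castSucc i)).1
    have hy' : ∀ i, y l (u (Fin.castSucc i)) = F (v i) := fun i => by
      simpa using (hu (Fin.castSucc i)).2
    have hxlast : x l (u (Fin.last r)) = Structure.funMap g v := by
      simpa using (hu (Fin.last r)).1
    have hylast : y l (u (Fin.last r)) = F (Structure.funMap g v) := by
      simpa using (hu (Fin.last r)).2
    have key := (scottEq_fun_iff (hsc l) g (fun i => u (Fin.castSucc i))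
        (u (Fin.last r))).mp (by
      rw [hxlast]
      exact congrArg (Structure.funMap g) (funext hx'))
    show F (Structure.funMap g v) = Structure.funMap g (F ∘ v)
    calc F (Structure.funMap g v) = y l (u (Fin.last r)) := hylast.symm
      _ = Structure.funMap g (y l ∘ fun i => u (Fin.castSucc i)) := key.symm
      _ = Structure.funMap g (F ∘ v) :=
        congrArg (Structure.funMap g) (funext fun i => hy' i)
  · intro r rel v
    obtain ⟨l, u, hu⟩ := stage v
    have key := scottEq_rel_iff (hsc l) rel u
    have hxv : (x l ∘ u) = v := funext fun i => (hu i).1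
    have hyv : (y l ∘ u) = F ∘ v := funext fun i => (hu i).2
    rw [hxv, hyv] at key
    exact key.symm
  · intro i
    exact hfun (hF (a i)) ⟨0, i, rfl, rfl⟩

end ScottAux

/-- if `M` is a countable structure, `β < ω₁` a Scott ordinal for `M`, and
`ā`, `b̄` are tuples of `M` both satisfying the level-`β` Scott formula `φ_{β,c̄}` of some
tuple `c̄` from `M`, then some automorphism of `M` maps `ā` to `b̄`. -/
theorem statement6 {L : FirstOrder.Language.{0,0}} [Countable L.Symbols]
    (M : Type) [L.Structure M] [Countable M]
    (β : Ordinal) (hβ : β < (Cardinal.aleph 1).ord) (hScott : IsScottOrdinal L M β)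
    (n : ℕ) (c a b : Fin n → M)
    (ha : ScottEq L M M β n c a) (hb : ScottEq L M M β n c b) :
    ∃ f : M ≃[L] M, ∀ i, f (a i) = b i := by
  have hab : ScottEq L M M β n a b := scottEq_trans β (scottEq_symm β ha) hb
  cases isEmpty_or_nonempty M with
  | inl hM => exact ⟨FirstOrder.Language.Equiv.refl L M, fun i => (hM.false (a i)).elim⟩
  | inr hM =>
    obtain ⟨e, he⟩ := exists_surjective_nat M
    exact scott_aux hScott he hab
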